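/- Let C be an L-convergence on a set S (a sequential convergence with unique limits), and let T(C) be the topology whose open sets are those U ⊆ S such that every C-convergent sequence with limit in U is eventually in U. Then a sequence s_n converges to s in the topology T(C) if and only if every subsequence of (s_n) has a further subsequence that C-converges to s. -/

import Mathlib

open Filter Topology

/-- The topology induced by a sequential convergence `C`: a set `U` is open iff every
`C`-convergent sequence with limit in `U` is eventually in `U`. -/
def seqTop {S : Type*} (C : (ℕ → S) → S → Prop) : TopologicalSpace S where
  IsOpen U := ∀ (u : ℕ → S) (s : S), C u s → s ∈ U → ∀ᶠ n in atTop, u n ∈ U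
  isOpen_univ := fun _ _ _ _ => Eventually.of_forall fun _ => trivial
  isOpen_inter := fun _ _ hU hV u s hC hs => (hU u s hC hs.1).and (hV u s hC hs.2)
  isOpen_sUnion := fun 𝒮 h u s hC hs => by
    obtain ⟨U, hU, hsU⟩ := hs
    exact (h U hU u s hC hsU).mono fun n hn => ⟨U, hU, hn⟩

/-- Any `ℕ`-valued sequence either takes some value frequently, or has a strictly
increasing subsequence. -/
lemma seqTop_aux_extract (m : ℕ → ℕ) :
    (∃ j, ∃ᶠ k in atTop, m k = j) ∨
    ∃ χ : ℕ → ℕ, StrictMono χ ∧ StrictMono (fun k => m (χ k)) := by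
  classical
  by_cases hb : ∃ B, ∀ k, m k ≤ B
  · left
    obtain ⟨B, hB⟩ := hb
    by_contra h
    push_neg at h
    have hfin : ∀ j, {k | m k = j}.Finite := by
      intro j
      have hj := h j
      obtain ⟨N, hN⟩ := Filter.eventually_atTop.1 hj
      apply Set.Finite.subset (Set.finite_Iio N)
      intro k hk
      by_contra hk'
      exact hN k (not_lt.mp hk') hk
    have huniv : (Set.univ : Set ℕ) ⊆ ⋃ j ∈ Set.Iic B, {k | m k = j} :=
      fun k _ => Set.mem_biUnion (hB k) rfl
    exact Set.infinite_univ
      (Set.Finite.subset ((Set.finite_Iic B).biUnion (fun j _ => hfin j)) huniv)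
  · right
    push_neg at hb
    have hrec : ∃ᶠ k in atTop, ∀ i < k, m i < m k := by
      rw [Filter.frequently_atTop]
      intro a
      have hex : ∃ k, (Finset.range (a + 1)).sup m < m k := hb _
      set k₀ := Nat.find hex with hk₀def
      have hk₀ : (Finset.range (a + 1)).sup m < m k₀ := Nat.find_spec hex
      have hmin : ∀ i < k₀, m i ≤ (Finset.range (a + 1)).sup m :=
        fun i hi => not_lt.mp (Nat.find_min hex hi)
      have hak : a ≤ k₀ := by
        by_contra hak
        push_neg at hak
        have : m k₀ ≤ (Finset.range (a + 1)).sup m :=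
          Finset.le_sup (Finset.mem_range.2 (by omega))
        omega
      exact ⟨k₀, hak, fun i hi => lt_of_le_of_lt (hmin i hi) hk₀⟩
    obtain ⟨χ, hχ, hrecχ⟩ := extraction_of_frequently_atTop hrec
    exact ⟨χ, hχ, fun a b hab => hrecχ b (χ a) (hχ hab)⟩

/-- Key lemma: if a `C`-convergent sequence takes values in the range of `w`, then its
limit is either in the range of `w` or is the `C`-limit of a subsequence of `w`. -/
lemma seqTop_key {S : Type*} (C : (ℕ → S) → S → Prop)
    (hconst : ∀ s : S, C (fun _ => s) s)
    (hsub : ∀ (u : ℕ → S) (s : S) (φ : ℕ → ℕ), StrictMono φ → C u s → C (u ∘ φ) s)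
    (huniq : ∀ (u : ℕ → S) (s t : S), C u s → C u t → s = t)
    (w z : ℕ → S) (r : S) (hz : C z r) (hmem : ∀ k, z k ∈ Set.range w) :
    r ∈ Set.range w ∨ ∃ ρ : ℕ → ℕ, StrictMono ρ ∧ C (w ∘ ρ) r := by
  choose m hm using hmem
  rcases seqTop_aux_extract m with ⟨j, hj⟩ | ⟨χ, hχ, hmχ⟩
  · left
    obtain ⟨χ, hχ, hall⟩ := extraction_of_frequently_atTop hj
    have h1 : C (z ∘ χ) r := hsub z r χ hχ hz
    have h2 : (z ∘ χ) = fun _ => w j := funext fun k => by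
      show z (χ k) = w j
      rw [← hm (χ k), hall k]
    rw [h2] at h1
    exact ⟨j, huniq _ _ _ (hconst (w j)) h1⟩
  · right
    refine ⟨fun k => m (χ k), hmχ, ?_⟩
    have h1 : C (z ∘ χ) r := hsub z r χ hχ hz
    have h2 : (w ∘ fun k => m (χ k)) = z ∘ χ := funext fun k => hm (χ k)
    rw [h2]
    exact h1

/-- For an L-convergence `C` (a sequential convergence with unique limits), a sequence
converges to `s` in the topology `T(C)` iff every subsequence has a further subsequence
that `C`-converges to `s`. -/
theorem stmt0 {S : Type*} (C : (ℕ → S) → S → Prop)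
    (hconst : ∀ s : S, C (fun _ => s) s)
    (hsub : ∀ (u : ℕ → S) (s : S) (φ : ℕ → ℕ), StrictMono φ → C u s → C (u ∘ φ) s)
    (huniq : ∀ (u : ℕ → S) (s t : S), C u s → C u t → s = t)
    (u : ℕ → S) (s : S) :
    Tendsto u atTop (@nhds S (seqTop C) s) ↔
      ∀ φ : ℕ → ℕ, StrictMono φ → ∃ ψ : ℕ → ℕ, StrictMono ψ ∧ C (u ∘ φ ∘ ψ) s := by
  letI : TopologicalSpace S := seqTop C
  constructor
  · intro hT φ hφ
    by_contra hno
    push_neg at hno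
    -- Step 1: u (φ n) = s only finitely often
    have hsfin : ∀ᶠ n in atTop, u (φ n) ≠ s := by
      by_contra h
      rw [Filter.not_eventually] at h
      simp only [not_not] at h
      obtain ⟨χ, hχ, hall⟩ := extraction_of_frequently_atTop h
      refine hno χ hχ ?_
      have : (u ∘ φ ∘ χ) = fun _ => s := funext fun k => hall k
      rw [this]
      exact hconst s
    obtain ⟨N, hN⟩ := Filter.eventually_atTop.1 hsfin
    -- Shifted sequence avoiding s
    set v' : ℕ → S := fun k => u (φ (k + N)) with hv'def
    have hmonoAdd : StrictMono (fun k : ℕ => k + N) := fun a b hab => Nat.add_lt_add_right hab N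
    have hT' : Tendsto v' atTop (𝓝 s) :=
      hT.comp ((hφ.comp hmonoAdd).tendsto_atTop)
    have hv'ne : ∀ k, v' k ≠ s := fun k => hN (k + N) (Nat.le_add_left _ _)
    have hno' : ∀ ψ : ℕ → ℕ, StrictMono ψ → ¬ C (v' ∘ ψ) s := by
      intro ψ hψ hc
      exact hno (fun k => ψ k + N) (fun a b hab => Nat.add_lt_add_right (hψ hab) N) hc
    by_cases hA : ∃ t, ∃ ρ : ℕ → ℕ, StrictMono ρ ∧ C (v' ∘ ρ) t
    · -- Case A: some subsequence of v' converges to some t (necessarily t ≠ s)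
      obtain ⟨t, ψ, hψ, hCt⟩ := hA
      have hts : t ≠ s := fun h => hno' ψ hψ (h ▸ hCt)
      set K : Set S := Set.range (v' ∘ ψ) ∪ {t} with hK
      have hopen : IsOpen Kᶜ := by
        show ∀ (z : ℕ → S) (r : S), C z r → r ∈ Kᶜ → ∀ᶠ n in atTop, z n ∈ Kᶜ
        intro z r hzr hr
        by_contra h
        rw [Filter.not_eventually] at h
        simp only [Set.notMem_compl_iff] at h
        obtain ⟨χ, hχ, hall⟩ := extraction_of_frequently_atTop h
        have hz1 : C (z ∘ χ) r := hsub z r χ hχ hzr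
        by_cases ht : ∃ᶠ k in atTop, (z ∘ χ) k = t
        · obtain ⟨χ₂, hχ₂, hall₂⟩ := extraction_of_frequently_atTop ht
          have h2 : C ((z ∘ χ) ∘ χ₂) r := hsub _ r χ₂ hχ₂ hz1
          have h3 : ((z ∘ χ) ∘ χ₂) = fun _ => t := funext fun k => hall₂ k
          rw [h3] at h2
          have hrt : r = t := huniq _ r t h2 (hconst t)
          exact hr (Or.inr (by rw [hrt]; rfl))
        · rw [Filter.not_frequently] at ht
          obtain ⟨K₀, hK₀⟩ := Filter.eventually_atTop.1 ht
          have hmono : StrictMono (fun k : ℕ => k + K₀) := fun a b hab => Nat.add_lt_add_right hab K₀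
          have hz2 : C ((z ∘ χ) ∘ fun k => k + K₀) r := hsub _ r _ hmono hz1
          have hmem : ∀ k, ((z ∘ χ) ∘ fun k => k + K₀) k ∈ Set.range (v' ∘ ψ) := by
            intro k
            have h1 := hall (k + K₀)
            have h2 := hK₀ (k + K₀) (Nat.le_add_left _ _)
            rcases h1 with h1 | h1
            · exact h1
            · exact absurd (Set.eq_of_mem_singleton h1) h2
          rcases seqTop_key C hconst hsub huniq (v' ∘ ψ) _ r hz2 hmem with hr' | ⟨ρ, hρ, hCρ⟩
          · exact hr (Or.inl hr')
          · have hCt' : C ((v' ∘ ψ) ∘ ρ) t := hsub _ t ρ hρ hCt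
            have hrt : r = t := huniq _ r t hCρ hCt'
            exact hr (Or.inr (by rw [hrt]; rfl))
      have hsK : s ∈ Kᶜ := by
        intro hs
        rcases hs with hs | hs
        · obtain ⟨k, hk⟩ := hs
          exact hv'ne (ψ k) hk
        · exact hts (Set.eq_of_mem_singleton hs).symm
      have hev : ∀ᶠ n in atTop, v' n ∈ Kᶜ := hT' (hopen.mem_nhds hsK)
      have hfr : ∃ᶠ n in atTop, v' n ∈ K :=
        Filter.frequently_atTop.2 fun a => ⟨ψ a, hψ.le_apply, Or.inl ⟨a, rfl⟩⟩
      obtain ⟨n, hn1, hn2⟩ := (hfr.and_eventually hev).exists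
      exact hn2 hn1
    · -- Case B: no subsequence of v' converges at all
      push_neg at hA
      set K : Set S := Set.range v' with hK
      have hopen : IsOpen Kᶜ := by
        show ∀ (z : ℕ → S) (r : S), C z r → r ∈ Kᶜ → ∀ᶠ n in atTop, z n ∈ Kᶜ
        intro z r hzr hr
        by_contra h
        rw [Filter.not_eventually] at h
        simp only [Set.notMem_compl_iff] at h
        obtain ⟨χ, hχ, hall⟩ := extraction_of_frequently_atTop h
        have hz1 : C (z ∘ χ) r := hsub z r χ hχ hzr
        rcases seqTop_key C hconst hsub huniq v' (z ∘ χ) r hz1 hall with hr' | ⟨ρ, hρ, hCρ⟩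
        · exact hr hr'
        · exact hA r ρ hρ hCρ
      have hsK : s ∈ Kᶜ := by
        intro hs
        obtain ⟨k, hk⟩ := hs
        exact hv'ne k hk
      have hev : ∀ᶠ n in atTop, v' n ∈ Kᶜ := hT' (hopen.mem_nhds hsK)
      obtain ⟨n, hn⟩ := hev.exists
      exact hn ⟨n, rfl⟩
  · intro H
    refine tendsto_nhds.mpr fun U hU hsU => ?_
    by_contra h
    have h' : ∃ᶠ n in atTop, u n ∉ U :=
      Filter.not_eventually.mp (h : ¬ ∀ᶠ n in atTop, u n ∈ U)
    obtain ⟨φ, hφ, hall⟩ := extraction_of_frequently_atTop h'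
    obtain ⟨ψ, hψ, hC⟩ := H φ hφ
    have hU' : ∀ (z : ℕ → S) (r : S), C z r → r ∈ U → ∀ᶠ n in atTop, z n ∈ U := hU
    obtain ⟨n, hn⟩ := (hU' _ s hC hsU).exists
    exact hall (ψ n) hn
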